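/- arXiv:1711.02327 — 4 statements merged into one kernel-verified Lean document; each statement's English description precedes it below -/
import Mathlib

section
/- Let L be a simple finite-dimensional anticommutative algebra over a field F of characteristic zero and let r = Σᵢ aᵢ⊗bᵢ ∈ L⊗L be a non skew-symmetric solution of the classical Yang–Baxter equation such that r + τ(r) is L-invariant. Then there exist a non-degenerate symmetric associative bilinear form ω on L and a non-zero scalar λ ∈ F such that the linear operator R : L → L defined by R(a) = Σᵢ ω(aᵢ, a)·bᵢ is a Rota–Baxter operator of weight λ. -/
open TensorProduct

/-- `R` is a Rota–Baxter operator of weight `lam` for the bilinear product `mul`. -/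
def IsRotaBaxter {F L : Type*} [Field F] [AddCommGroup L] [Module F L]
    (mul : L →ₗ[F] L →ₗ[F] L) (R : L → L) (lam : F) : Prop :=
  ∀ x y : L, mul (R x) (R y) = R (mul (R x) y + mul x (R y) + lam • mul x y)

/-- The classical Yang–Baxter equation for `r = ∑ i, a i ⊗ b i`. -/
def CYBE {F L : Type*} [Field F] [AddCommGroup L] [Module F L]
    (mul : L →ₗ[F] L →ₗ[F] L) {n : ℕ} (a b : Fin n → L) : Prop :=
  ∑ i : Fin n, ∑ j : Fin n,
      (mul (a i) (a j) ⊗ₜ[F] (b i ⊗ₜ[F] b j)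
        - a i ⊗ₜ[F] (mul (a j) (b i) ⊗ₜ[F] b j)
        + a i ⊗ₜ[F] (a j ⊗ₜ[F] mul (b i) (b j))) = 0

section helpers2
variable {F L : Type*} [Field F] [AddCommGroup L] [Module F L]

noncomputable def contr (f : Module.Dual F L) : L ⊗[F] L →ₗ[F] L :=
  TensorProduct.lift (f.smulRight LinearMap.id)

@[simp] lemma contr_tmul (f : Module.Dual F L) (x y : L) :
    contr f (x ⊗ₜ[F] y) = f x • y := rfl

lemma tensor_eq_zero_of_contr [FiniteDimensional F L] (t : L ⊗[F] L)
    (h : ∀ f : Module.Dual F L, contr f t = 0) : t = 0 := by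
  let B := Module.finBasis F L
  have key : ∀ (i j : Fin (Module.finrank F L)) (u : L ⊗[F] L),
      (B.tensorProduct B).repr u (i, j) = B.coord j (contr (B.coord i) u) := by
    intro i j u
    induction u using TensorProduct.induction_on with
    | zero => simp
    | tmul x y =>
        simp [Module.Basis.tensorProduct_repr_tmul_apply, Module.Basis.coord_apply, mul_comm]
    | add x y hx hy => simp [hx, hy]
  have : (B.tensorProduct B).repr t = 0 := by
    ext ⟨i, j⟩
    rw [key i j t, h]
    simp
  simpa using (B.tensorProduct B).repr.map_eq_zero_iff.mp this

lemma mul_sum_sum (mul : L →ₗ[F] L →ₗ[F] L) {n : ℕ} (c d : Fin n → F) (u v : Fin n → L) :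
    mul (∑ i, c i • u i) (∑ j, d j • v j)
      = ∑ i, ∑ j, (c i * d j) • mul (u i) (v j) := by
  simp only [map_sum, map_smul, LinearMap.sum_apply, LinearMap.smul_apply, Finset.smul_sum,
    smul_smul]
  rw [Finset.sum_comm]
  exact Finset.sum_congr rfl fun i _ => Finset.sum_congr rfl fun j _ => by rw [mul_comm]
end helpers2



theorem stmt0 {F L : Type*} [Field F] [CharZero F] [AddCommGroup L] [Module F L]
    [FiniteDimensional F L] (mul : L →ₗ[F] L →ₗ[F] L)
    -- `L` is anticommutative
    (hanti : ∀ x : L, mul x x = 0)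
    -- `L` is simple
    (hsimple : (∃ x y : L, mul x y ≠ 0) ∧
      ∀ I : Submodule F L, (∀ x ∈ I, ∀ y : L, mul x y ∈ I ∧ mul y x ∈ I) → I = ⊥ ∨ I = ⊤)
    -- `r = ∑ i, a i ⊗ b i` is a solution of the CYBE
    {n : ℕ} (a b : Fin n → L) (hcybe : CYBE mul a b)
    -- `r` is not skew-symmetric: `τ(r) ≠ -r`
    (hns : ∑ i, b i ⊗ₜ[F] a i ≠ -∑ i, a i ⊗ₜ[F] b i)
    -- `r + τ(r)` is `L`-invariant
    (hinv : ∀ c : L, ∑ i, (mul (a i) c ⊗ₜ[F] b i + a i ⊗ₜ[F] mul (b i) c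
        + mul (b i) c ⊗ₜ[F] a i + b i ⊗ₜ[F] mul (a i) c) = 0) :
    ∃ (ω : L →ₗ[F] L →ₗ[F] F) (lam : F),
      (∀ x : L, (∀ y : L, ω x y = 0) → x = 0) ∧
      (∀ x y : L, ω x y = ω y x) ∧
      (∀ x y z : L, ω (mul x y) z = ω x (mul y z)) ∧
      lam ≠ 0 ∧
      IsRotaBaxter mul (fun c => ∑ i, ω (a i) c • b i) lam := by
  have hcybe' : ∑ i : Fin n, ∑ j : Fin n,
      (mul (a i) (a j) ⊗ₜ[F] (b i ⊗ₜ[F] b j)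
        - a i ⊗ₜ[F] (mul (a j) (b i) ⊗ₜ[F] b j)
        + a i ⊗ₜ[F] (a j ⊗ₜ[F] mul (b i) (b j))) = 0 := hcybe
  clear hcybe
  rename' hcybe' => hcybe
  have tensor_eq_zero_of_contr := tensor_eq_zero_of_contr (F := F) (L := L)
  have hanti' : ∀ x y : L, mul y x = -mul x y := by
    intro x y
    have h := hanti (x + y)
    simp only [map_add, LinearMap.add_apply, hanti, zero_add, add_zero] at h
    exact eq_neg_of_add_eq_zero_left h
  -- the map P
  let P : Module.Dual F L →ₗ[F] L :=
    { toFun := fun f => ∑ i, (f (a i) • b i + f (b i) • a i)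
      map_add' := by
        intro f g
        rw [← Finset.sum_add_distrib]
        refine Finset.sum_congr rfl fun i _ => ?_
        simp only [LinearMap.add_apply, add_smul]
        abel
      map_smul' := by
        intro c f
        simp only [LinearMap.smul_apply, smul_eq_mul, RingHom.id_apply, Finset.smul_sum,
          smul_add, smul_smul] }
  have hPapp : ∀ f : Module.Dual F L, P f = ∑ i, (f (a i) • b i + f (b i) • a i) :=
    fun f => rfl
  -- invariance of P
  have hP : ∀ (f : Module.Dual F L) (c : L),
      mul (P f) c = - P (f ∘ₗ mul.flip c) := by
    intro f c
    have h := congrArg (contr (F := F) f) (hinv c)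
    rw [map_sum, map_zero] at h
    simp only [map_add, contr_tmul] at h
    have hL : mul (P f) c = ∑ i, (f (a i) • mul (b i) c + f (b i) • mul (a i) c) := by
      rw [hPapp, map_sum, LinearMap.sum_apply]
      refine Finset.sum_congr rfl fun i _ => ?_
      simp only [map_add, map_smul, LinearMap.add_apply, LinearMap.smul_apply]
    have hR : P (f ∘ₗ mul.flip c)
        = ∑ i, (f (mul (a i) c) • b i + f (mul (b i) c) • a i) := by
      rw [hPapp]
      simp only [LinearMap.comp_apply, LinearMap.flip_apply]
    rw [hL, hR, eq_neg_iff_add_eq_zero, ← Finset.sum_add_distrib, ← h]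
    refine Finset.sum_congr rfl fun i _ => ?_
    abel
  -- range of P is a two-sided ideal
  have hideal : ∀ x ∈ LinearMap.range P, ∀ y : L,
      mul x y ∈ LinearMap.range P ∧ mul y x ∈ LinearMap.range P := by
    rintro x ⟨f, rfl⟩ y
    have h1 : mul (P f) y ∈ LinearMap.range P := by
      rw [hP f y]
      exact neg_mem (LinearMap.mem_range_self P _)
    exact ⟨h1, by rw [hanti' (P f) y]; exact neg_mem h1⟩
  -- P is surjective
  have hsurj : Function.Surjective P := by
    have := hsimple.2 (LinearMap.range P) hideal
    rcases this with h | h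
    · exfalso
      have hP0 : ∀ f : Module.Dual F L, P f = 0 := by
        intro f
        have : P f ∈ LinearMap.range P := LinearMap.mem_range_self P f
        rw [h] at this
        simpa using this
      have hs0 : (∑ i, (a i ⊗ₜ[F] b i + b i ⊗ₜ[F] a i)) = 0 := by
        apply tensor_eq_zero_of_contr
        intro f
        rw [map_sum]
        simp only [map_add, contr_tmul]
        exact hP0 f
      rw [Finset.sum_add_distrib] at hs0
      exact hns (eq_neg_of_add_eq_zero_left (by rw [← hs0]; abel))
    · exact LinearMap.range_eq_top.mp h
  have hinj : Function.Injective P :=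
    (LinearMap.injective_iff_surjective_of_finrank_eq_finrank
      (by rw [Subspace.dual_finrank_eq])).mpr hsurj
  let e : Module.Dual F L ≃ₗ[F] L := LinearEquiv.ofBijective P ⟨hinj, hsurj⟩
  let ω : L →ₗ[F] L →ₗ[F] F := e.symm.toLinearMap
  have hωP : ∀ f : Module.Dual F L, ω (P f) = f := fun f => e.symm_apply_apply f
  have hPω : ∀ x : L, P (ω x) = x := fun x => e.apply_symm_apply x
  -- symmetry
  have hsy : ∀ u v : L, ω u v = ω v u := by
    intro u v
    have hu : u = P (ω u) := (hPω u).symm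
    have hv : v = P (ω v) := (hPω v).symm
    rw [show ω u v = ω u (P (ω v)) from by rw [← hv],
        show ω v u = ω v (P (ω u)) from by rw [← hu]]
    rw [hPapp, hPapp, map_sum, map_sum]
    refine Finset.sum_congr rfl fun i _ => ?_
    simp only [map_add, map_smul, smul_eq_mul]
    ring
  -- associativity
  have hassoc : ∀ x y z : L, ω (mul x y) z = ω x (mul y z) := by
    intro x y z
    have hx : mul x y = - P ((ω x) ∘ₗ mul.flip y) := by
      rw [← hP (ω x) y, hPω]
    rw [hx, map_neg, hωP, LinearMap.neg_apply, LinearMap.comp_apply, LinearMap.flip_apply,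
      hanti' y z, map_neg, neg_neg]
  -- nondegeneracy
  have hnd : ∀ x : L, (∀ y : L, ω x y = 0) → x = 0 := by
    intro x hx
    have : ω x = 0 := LinearMap.ext hx
    rw [← hPω x, this, map_zero]
  -- completeness: sum identity
  have hid : ∀ c : L, ∑ i, (ω (a i) c • b i + ω (b i) c • a i) = c := by
    intro c
    have : ∀ i : Fin n, ω (a i) c = (ω c) (a i) := fun i => hsy (a i) c
    calc ∑ i, (ω (a i) c • b i + ω (b i) c • a i)
        = ∑ i, ((ω c) (a i) • b i + (ω c) (b i) • a i) := by
          refine Finset.sum_congr rfl fun i _ => ?_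
          rw [hsy (a i) c, hsy (b i) c]
      _ = P (ω c) := (hPapp (ω c)).symm
      _ = c := hPω c
  -- the Rota–Baxter operator as a linear map
  let Rl : L →ₗ[F] L :=
    { toFun := fun c => ∑ i, ω (a i) c • b i
      map_add' := by
        intro u v
        rw [← Finset.sum_add_distrib]
        exact Finset.sum_congr rfl fun i _ => by rw [map_add, add_smul]
      map_smul' := by
        intro c v
        simp only [map_smul, smul_eq_mul, RingHom.id_apply, Finset.smul_sum, smul_smul] }
  have hRl : ∀ c : L, Rl c = ∑ i, ω (a i) c • b i := fun c => rfl
  have hR' : ∀ y : L, ∑ i, ω y (b i) • a i = y - Rl y := by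
    intro y
    have h := hid y
    rw [Finset.sum_add_distrib] at h
    have h2 : ∑ i, ω (b i) y • a i = ∑ i, ω y (b i) • a i :=
      Finset.sum_congr rfl fun i _ => by rw [hsy (b i) y]
    rw [h2] at h
    rw [← hRl] at h
    exact eq_sub_of_add_eq' h
  -- contract the CYBE with ω x ⊗ ω y ⊗ id
  have hRB : ∀ x y : L, mul (Rl x) (Rl y)
      = Rl (mul (Rl x) y + mul x (Rl y) + (-1 : F) • mul x y) := by
    intro x y
    let Φ : L ⊗[F] (L ⊗[F] L) →ₗ[F] L :=
      TensorProduct.lift ((ω x).smulRight (contr (ω y)))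
    have hΦ : ∀ u v w : L, Φ (u ⊗ₜ[F] (v ⊗ₜ[F] w)) = ω x u • (ω y v • w) := by
      intro u v w
      simp only [Φ, TensorProduct.lift.tmul, LinearMap.smulRight_apply, LinearMap.smul_apply,
        contr_tmul]
    have hkey : ∑ i : Fin n, ∑ j : Fin n,
        (ω x (mul (a i) (a j)) • (ω y (b i) • b j)
          - ω x (a i) • (ω y (mul (a j) (b i)) • b j)
          + ω x (a i) • (ω y (a j) • mul (b i) (b j))) = 0 := by
      have h := congrArg Φ hcybe
      rw [map_sum, map_zero] at h
      calc _ = ∑ i : Fin n, Φ (∑ j : Fin n,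
          (mul (a i) (a j) ⊗ₜ[F] (b i ⊗ₜ[F] b j)
            - a i ⊗ₜ[F] (mul (a j) (b i) ⊗ₜ[F] b j)
            + a i ⊗ₜ[F] (a j ⊗ₜ[F] mul (b i) (b j)))) := by
            refine Finset.sum_congr rfl fun i _ => ?_
            rw [map_sum]
            refine Finset.sum_congr rfl fun j _ => ?_
            rw [map_add, map_sub, hΦ, hΦ, hΦ]
        _ = 0 := h
    -- split hkey into three double sums
    rw [show (∑ i : Fin n, ∑ j : Fin n,
        (ω x (mul (a i) (a j)) • (ω y (b i) • b j)
          - ω x (a i) • (ω y (mul (a j) (b i)) • b j)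
          + ω x (a i) • (ω y (a j) • mul (b i) (b j))))
        = (∑ i : Fin n, ∑ j : Fin n, ω x (mul (a i) (a j)) • (ω y (b i) • b j))
          - (∑ i : Fin n, ∑ j : Fin n, ω x (a i) • (ω y (mul (a j) (b i)) • b j))
          + (∑ i : Fin n, ∑ j : Fin n, ω x (a i) • (ω y (a j) • mul (b i) (b j))) from by
        rw [← Finset.sum_sub_distrib, ← Finset.sum_add_distrib]
        refine Finset.sum_congr rfl fun i _ => ?_
        rw [← Finset.sum_sub_distrib, ← Finset.sum_add_distrib]] at hkey
    -- term 3
    have E3 : ∑ i : Fin n, ∑ j : Fin n, ω x (a i) • (ω y (a j) • mul (b i) (b j))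
        = mul (Rl x) (Rl y) := by
      rw [hRl, hRl, mul_sum_sum]
      refine Finset.sum_congr rfl fun i _ => Finset.sum_congr rfl fun j _ => ?_
      rw [smul_smul, hsy x (a i), hsy y (a j)]
    -- term 1
    have E1 : ∑ i : Fin n, ∑ j : Fin n, ω x (mul (a i) (a j)) • (ω y (b i) • b j)
        = Rl (mul x (y - Rl y)) := by
      rw [Finset.sum_comm]
      have hinner : ∀ j : Fin n, ω (a j) (mul x (y - Rl y))
          = ∑ i, ω y (b i) * ω (a j) (mul x (a i)) := by
        intro j
        rw [← hR' y, map_sum, map_sum]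
        exact Finset.sum_congr rfl fun i _ => by simp only [map_smul, smul_eq_mul]
      calc ∑ j : Fin n, ∑ i : Fin n, ω x (mul (a i) (a j)) • (ω y (b i) • b j)
          = ∑ j : Fin n, (∑ i : Fin n, ω y (b i) * ω (a j) (mul x (a i))) • b j := by
            refine Finset.sum_congr rfl fun j _ => ?_
            rw [Finset.sum_smul]
            refine Finset.sum_congr rfl fun i _ => ?_
            rw [smul_smul, ← hassoc x (a i) (a j), hsy (mul x (a i)) (a j), mul_comm]
        _ = ∑ j : Fin n, ω (a j) (mul x (y - Rl y)) • b j := by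
            refine Finset.sum_congr rfl fun j _ => ?_
            rw [hinner j]
        _ = Rl (mul x (y - Rl y)) := rfl
    -- term 2
    have E2 : ∑ i : Fin n, ∑ j : Fin n, ω x (a i) • (ω y (mul (a j) (b i)) • b j)
        = Rl (mul (Rl x) y) := by
      rw [Finset.sum_comm]
      have hinner : ∀ j : Fin n, ω y (mul (a j) (Rl x))
          = ∑ i, ω x (a i) * ω y (mul (a j) (b i)) := by
        intro j
        rw [hRl, map_sum, map_sum]
        refine Finset.sum_congr rfl fun i _ => ?_
        simp only [map_smul, smul_eq_mul]
        rw [hsy (a i) x]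
      calc ∑ j : Fin n, ∑ i : Fin n, ω x (a i) • (ω y (mul (a j) (b i)) • b j)
          = ∑ j : Fin n, (∑ i : Fin n, ω x (a i) * ω y (mul (a j) (b i))) • b j := by
            refine Finset.sum_congr rfl fun j _ => ?_
            rw [Finset.sum_smul]
            exact Finset.sum_congr rfl fun i _ => by rw [smul_smul]
        _ = ∑ j : Fin n, ω (a j) (mul (Rl x) y) • b j := by
            refine Finset.sum_congr rfl fun j _ => ?_
            rw [← hinner j, hsy y (mul (a j) (Rl x)), hassoc (a j) (Rl x) y]
        _ = Rl (mul (Rl x) y) := rfl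
    rw [E1, E2, E3] at hkey
    -- conclude
    rw [map_add, map_add, map_smul, neg_one_smul]
    rw [← sub_eq_zero, ← hkey, map_sub, map_sub]
    abel
  refine ⟨ω, -1, hnd, hsy, hassoc, by norm_num, ?_⟩
  intro x y
  exact hRB x y
end

section
/- Let L = sl₂(F) over a field F of characteristic zero with standard basis x, h, y satisfying [h,x] = 2x, [h,y] = −2y, [x,y] = h, and let α ∈ F. Then the linear operator R : L → L defined on the basis by R(x) = 0, R(h) = 2h + 8αx, R(y) = 4y − 4αh is a Rota–Baxter operator of weight −4. -/
theorem stmt13 {F L : Type*} [Field F] [CharZero F] [LieRing L] [LieAlgebra F L]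
    -- `L = sl₂(F)` with standard basis `x, h, y`
    (bb : Module.Basis (Fin 3) F L) (x h y : L)
    (hb0 : bb 0 = x) (hb1 : bb 1 = h) (hb2 : bb 2 = y)
    (hhx : ⁅h, x⁆ = (2 : F) • x) (hhy : ⁅h, y⁆ = (-2 : F) • y) (hxy : ⁅x, y⁆ = h)
    (α : F)
    -- the operator `R`
    (R : L →ₗ[F] L)
    (hRx : R x = 0) (hRh : R h = (2 : F) • h + (8 * α) • x)
    (hRy : R y = (4 : F) • y - (4 * α) • h) :
    -- `R` is a Rota–Baxter operator of weight `-4`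
    ∀ u v : L, ⁅R u, R v⁆ = R (⁅R u, v⁆ + ⁅u, R v⁆ + (-4 : F) • ⁅u, v⁆) := by
  have hxh : ⁅x, h⁆ = (-2 : F) • x := by
    rw [← lie_skew, hhx]; module
  have hyh : ⁅y, h⁆ = (2 : F) • y := by
    rw [← lie_skew, hhy]; module
  have hyx : ⁅y, x⁆ = -h := by
    rw [← lie_skew, hxy]
  let B1 : L →ₗ[F] L →ₗ[F] L := LinearMap.mk₂ F (fun u v => ⁅R u, R v⁆)
    (by intros; simp [map_add, add_lie])
    (by intros; simp [map_smul, smul_lie])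
    (by intros; simp [map_add, lie_add])
    (by intros; simp [map_smul, lie_smul])
  let B2 : L →ₗ[F] L →ₗ[F] L := LinearMap.mk₂ F
    (fun u v => R (⁅R u, v⁆ + ⁅u, R v⁆ + (-4 : F) • ⁅u, v⁆))
    (by intros; simp only [map_add, add_lie, lie_add, smul_add]; rw [← map_add]; ring_nf; abel_nf; rw [map_add]; abel)
    (by intros; simp only [map_smul, smul_lie, lie_smul, smul_comm ((-4 : F))]; rw [← smul_add, ← smul_add, map_smul])
    (by intros; simp only [map_add, add_lie, lie_add, smul_add]; rw [← map_add]; abel_nf; rw [map_add]; abel)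
    (by intros; simp only [map_smul, smul_lie, lie_smul, smul_comm ((-4 : F))]; rw [← smul_add, ← smul_add, map_smul])
  have hB : B1 = B2 := by
    apply bb.ext; intro i
    apply Module.Basis.ext bb; intro j
    fin_cases i <;> fin_cases j <;>
      simp [B1, B2, hb0, hb1, hb2, hRx, hRh, hRy, hhx, hhy, hxy, hxh, hyh, hyx,
        lie_add, add_lie, lie_smul, smul_lie, sub_lie, lie_sub, lie_self,
        map_add, map_smul, map_sub, smul_sub, smul_add, smul_smul] <;>
      module
  intro u v
  exact LinearMap.congr_fun (LinearMap.congr_fun hB u) v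
end

section
/- Let L = sl₂(F) over a field F of characteristic zero with standard basis x, h, y satisfying [h,x] = 2x, [h,y] = −2y, [x,y] = h, and let α ∈ F. Then the linear operator Q : L → L defined on the basis by Q(x) = 4x, Q(h) = −8αx + 2h, Q(y) = 4αh is a Rota–Baxter operator of weight −4, and Q + R = 4·id, where R is the linear operator defined by R(x) = 0, R(h) = 2h + 8αx, R(y) = 4y − 4αh and id is the identity operator on L. -/
theorem stmt14 {F L : Type*} [Field F] [CharZero F] [LieRing L] [LieAlgebra F L]
    -- `L = sl₂(F)` with standard basis `x, h, y`
    (bb : Module.Basis (Fin 3) F L) (x h y : L)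
    (hb0 : bb 0 = x) (hb1 : bb 1 = h) (hb2 : bb 2 = y)
    (hhx : ⁅h, x⁆ = (2 : F) • x) (hhy : ⁅h, y⁆ = (-2 : F) • y) (hxy : ⁅x, y⁆ = h)
    (α : F)
    -- the operator `Q`
    (Q : L →ₗ[F] L)
    (hQx : Q x = (4 : F) • x) (hQh : Q h = (-8 * α) • x + (2 : F) • h)
    (hQy : Q y = (4 * α) • h)
    -- the operator `R`
    (R : L →ₗ[F] L)
    (hRx : R x = 0) (hRh : R h = (2 : F) • h + (8 * α) • x)
    (hRy : R y = (4 : F) • y - (4 * α) • h) :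
    -- `Q` is a Rota–Baxter operator of weight `-4`, and `Q + R = 4·id`
    (∀ u v : L, ⁅Q u, Q v⁆ = Q (⁅Q u, v⁆ + ⁅u, Q v⁆ + (-4 : F) • ⁅u, v⁆)) ∧
    Q + R = (4 : F) • (LinearMap.id : L →ₗ[F] L) := by
  have hxh : ⁅x, h⁆ = (-2 : F) • x := by
    rw [← lie_skew, hhx]; module
  have hyh : ⁅y, h⁆ = (2 : F) • y := by
    rw [← lie_skew, hhy]; module
  have hyx : ⁅y, x⁆ = -h := by
    rw [← lie_skew, hxy]
  constructor
  · intro u v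
    obtain ⟨a, b, c, rfl⟩ : ∃ a b c : F, a • x + b • h + c • y = u := by
      refine ⟨bb.repr u 0, bb.repr u 1, bb.repr u 2, ?_⟩
      have := bb.sum_repr u
      rwa [Fin.sum_univ_three, hb0, hb1, hb2] at this
    obtain ⟨d, e, f, rfl⟩ : ∃ d e f : F, d • x + e • h + f • y = v := by
      refine ⟨bb.repr v 0, bb.repr v 1, bb.repr v 2, ?_⟩
      have := bb.sum_repr v
      rwa [Fin.sum_univ_three, hb0, hb1, hb2] at this
    simp only [map_add, map_smul, map_zero, zero_smul, add_zero, zero_add, hQx, hQh, hQy, lie_add, add_lie, lie_smul, smul_lie,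
      hhx, hhy, hxy, hxh, hyh, hyx, lie_self, smul_add, smul_smul, smul_neg, smul_zero,
      lie_neg, neg_lie]
    simp only [map_add, map_smul, map_neg, hQx, hQh, hQy, smul_add, smul_smul, smul_neg]
    module
  · apply LinearMap.ext
    intro u
    obtain ⟨a, b, c, rfl⟩ : ∃ a b c : F, a • x + b • h + c • y = u := by
      refine ⟨bb.repr u 0, bb.repr u 1, bb.repr u 2, ?_⟩
      have := bb.sum_repr u
      rwa [Fin.sum_univ_three, hb0, hb1, hb2] at this
    simp only [LinearMap.add_apply, LinearMap.smul_apply, LinearMap.id_apply, map_add,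
      map_smul, hQx, hQh, hQy, hRx, hRh, hRy, smul_add, smul_sub, smul_smul, smul_zero]
    module
end

section
/- Let 𝕄 be the 7-dimensional anticommutative algebra over ℂ with basis h, x, x', y, y', z, z' and multiplication table hx = 2x, hy = 2y, hz = 2z, hx' = −2x', hy' = −2y', hz' = −2z', xx' = yy' = zz' = h, xy = 2z', yz = 2x', zx = 2y', x'y' = −2z, y'z' = −2x, z'x' = −2y (all remaining products of basis elements zero, and products anticommutative). Then for arbitrary α, β, γ, δ, μ ∈ ℂ, the linear operator R : 𝕄 → 𝕄 defined on the basis by R(h) = (1/2)h + 2αx + 2βy' + 2γz, R(x) = 0, R(x') = x' − αh + δy' − 2βz, R(y) = y − βh − δx + μz, R(y') = 0, R(z) = 0, R(z') = z' − γh + 2βx − μy' is a Rota–Baxter operator of weight −1 on 𝕄. -/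
set_option maxHeartbeats 4000000 in
theorem stmt16 {V : Type*} [AddCommGroup V] [Module ℂ V]
    (mul : V →ₗ[ℂ] V →ₗ[ℂ] V)
    -- `𝕄` is anticommutative
    (hanti : ∀ v : V, mul v v = 0)
    -- basis `h, x, x', y, y', z, z'` of the 7-dimensional simple non-Lie Malcev algebra
    (e : Module.Basis (Fin 7) ℂ V) (h x x' y y' z z' : V)
    (he0 : e 0 = h) (he1 : e 1 = x) (he2 : e 2 = x') (he3 : e 3 = y)
    (he4 : e 4 = y') (he5 : e 5 = z) (he6 : e 6 = z')
    -- multiplication table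
    (hhx : mul h x = (2 : ℂ) • x) (hhy : mul h y = (2 : ℂ) • y) (hhz : mul h z = (2 : ℂ) • z)
    (hhx' : mul h x' = (-2 : ℂ) • x') (hhy' : mul h y' = (-2 : ℂ) • y')
    (hhz' : mul h z' = (-2 : ℂ) • z')
    (hxx' : mul x x' = h) (hyy' : mul y y' = h) (hzz' : mul z z' = h)
    (hxy : mul x y = (2 : ℂ) • z') (hyz : mul y z = (2 : ℂ) • x') (hzx : mul z x = (2 : ℂ) • y')
    (hx'y' : mul x' y' = (-2 : ℂ) • z) (hy'z' : mul y' z' = (-2 : ℂ) • x)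
    (hz'x' : mul z' x' = (-2 : ℂ) • y)
    -- all remaining products of basis elements are zero
    (hxy' : mul x y' = 0) (hxz' : mul x z' = 0) (hx'y : mul x' y = 0)
    (hx'z : mul x' z = 0) (hyz' : mul y z' = 0) (hy'z : mul y' z = 0)
    -- arbitrary scalars
    (α β γ δ μ : ℂ)
    -- the operator `R`
    (R : V →ₗ[ℂ] V)
    (hRh : R h = (2⁻¹ : ℂ) • h + (2 * α) • x + (2 * β) • y' + (2 * γ) • z)
    (hRx : R x = 0)
    (hRx' : R x' = x' - α • h + δ • y' - (2 * β) • z)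
    (hRy : R y = y - β • h - δ • x + μ • z)
    (hRy' : R y' = 0) (hRz : R z = 0)
    (hRz' : R z' = z' - γ • h + (2 * β) • x - μ • y') :
    IsRotaBaxter mul (fun v => R v) (-1 : ℂ) := by
  -- skew-symmetry
  have hskew : ∀ u v : V, mul v u = - mul u v := by
    intro u v
    have h1 := hanti (u + v)
    simp only [map_add, LinearMap.add_apply, hanti u, hanti v, add_zero, zero_add] at h1
    exact eq_neg_of_add_eq_zero_left h1
  have hxh : mul x h = (-2 : ℂ) • x := by rw [hskew, hhx]; module
  have hyh : mul y h = (-2 : ℂ) • y := by rw [hskew, hhy]; module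
  have hzh : mul z h = (-2 : ℂ) • z := by rw [hskew, hhz]; module
  have hx'h : mul x' h = (2 : ℂ) • x' := by rw [hskew, hhx']; module
  have hy'h : mul y' h = (2 : ℂ) • y' := by rw [hskew, hhy']; module
  have hz'h : mul z' h = (2 : ℂ) • z' := by rw [hskew, hhz']; module
  have hx'x : mul x' x = -h := by rw [hskew, hxx']
  have hy'y : mul y' y = -h := by rw [hskew, hyy']
  have hz'z : mul z' z = -h := by rw [hskew, hzz']
  have hyx : mul y x = (-2 : ℂ) • z' := by rw [hskew, hxy]; module
  have hzy : mul z y = (-2 : ℂ) • x' := by rw [hskew, hyz]; module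
  have hxz : mul x z = (-2 : ℂ) • y' := by rw [hskew, hzx]; module
  have hy'x' : mul y' x' = (2 : ℂ) • z := by rw [hskew, hx'y']; module
  have hz'y' : mul z' y' = (2 : ℂ) • x := by rw [hskew, hy'z']; module
  have hx'z' : mul x' z' = (2 : ℂ) • y := by rw [hskew, hz'x']; module
  have hy'x : mul y' x = 0 := by rw [hskew, hxy', neg_zero]
  have hz'x : mul z' x = 0 := by rw [hskew, hxz', neg_zero]
  have hyx' : mul y x' = 0 := by rw [hskew, hx'y, neg_zero]
  have hzx' : mul z x' = 0 := by rw [hskew, hx'z, neg_zero]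
  have hz'y : mul z' y = 0 := by rw [hskew, hyz', neg_zero]
  have hzy' : mul z y' = 0 := by rw [hskew, hy'z, neg_zero]
  have he0' : e (⟨0, by norm_num⟩ : Fin 7) = h := he0
  have he1' : e (⟨1, by norm_num⟩ : Fin 7) = x := he1
  have he2' : e (⟨2, by norm_num⟩ : Fin 7) = x' := he2
  have he3' : e (⟨3, by norm_num⟩ : Fin 7) = y := he3
  have he4' : e (⟨4, by norm_num⟩ : Fin 7) = y' := he4
  have he5' : e (⟨5, by norm_num⟩ : Fin 7) = z := he5
  have he6' : e (⟨6, by norm_num⟩ : Fin 7) = z' := he6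
  -- reduce to basis vectors via bilinearity
  set L1 : V →ₗ[ℂ] V →ₗ[ℂ] V := (mul.comp R).compl₂ R with hL1
  set M : V →ₗ[ℂ] V →ₗ[ℂ] V := mul.comp R + mul.compl₂ R + (-1 : ℂ) • mul with hM
  set L2 : V →ₗ[ℂ] V →ₗ[ℂ] V := (LinearMap.llcomp ℂ V V V R).comp M with hL2
  have key : L1 = L2 := by
    refine e.ext fun i => e.ext fun j => ?_
    fin_cases i <;> fin_cases j <;>
      simp only [Fin.isValue, he0, he1, he2, he3, he4, he5, he6, he0', he1', he2', he3', he4', he5', he6', hL1, hL2, hM,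
        LinearMap.compl₂_apply, LinearMap.comp_apply, LinearMap.llcomp_apply,
        LinearMap.add_apply, LinearMap.smul_apply,
        hRh, hRx, hRx', hRy, hRy', hRz, hRz',
        map_add, map_sub, map_smul, map_neg, map_zero,
        LinearMap.add_apply, LinearMap.sub_apply, LinearMap.neg_apply,
        LinearMap.smul_apply, LinearMap.zero_apply,
        hanti, hhx, hhy, hhz, hhx', hhy', hhz', hxx', hyy', hzz',
        hxy, hyz, hzx, hx'y', hy'z', hz'x', hxy', hxz', hx'y, hx'z, hyz', hy'z,
        hxh, hyh, hzh, hx'h, hy'h, hz'h, hx'x, hy'y, hz'z, hyx, hzy, hxz,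
        hy'x', hz'y', hx'z', hy'x, hz'x, hyx', hzx', hz'y, hzy',
        smul_add, smul_sub, smul_neg, smul_smul, neg_smul, smul_zero, neg_zero,
        add_zero, zero_add, sub_zero, zero_sub, neg_neg] <;>
      module
  intro u v
  have hk := LinearMap.congr_fun (LinearMap.congr_fun key u) v
  simpa only [hL1, hL2, hM, LinearMap.compl₂_apply, LinearMap.comp_apply,
    LinearMap.llcomp_apply, LinearMap.add_apply, LinearMap.smul_apply] using hk
end
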